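/- arXiv:1411.7451 — 2 statements merged into one kernel-verified Lean document; each statement's English description precedes it below -/
import Mathlib

section
/- If V : ℝ → ℝ is twice continuously differentiable, then the one-step impulse (trigonometric) integrator Φ is differentiable at every point of ℝ², and the determinant of its total derivative (Jacobian) equals 1 at every point; in particular Φ preserves the standard area (symplectic) form on ℝ². -/
open Real

/-- The one-step impulse (trigonometric) integrator for the Hamiltonian
`H(x,p) = p²/(2m) + mω²x²/2 + V(x)` : half-kick ∘ harmonic rotation ∘ half-kick. -/
noncomputable def impulseStep (m ω h : ℝ) (V : ℝ → ℝ) : ℝ × ℝ → ℝ × ℝ :=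
  fun z =>
    let x := z.1
    let p := z.2
    let pbar := p - (h / 2) * deriv V x
    let X := Real.cos (h * ω) * x + (Real.sin (h * ω) / (m * ω)) * pbar
    let pminus := -(m * ω) * Real.sin (h * ω) * x + Real.cos (h * ω) * pbar
    (X, pminus - (h / 2) * deriv V X)

open ContinuousLinearMap

/-- Determinant of a continuous linear endomorphism of `ℝ × ℝ` via the 2×2 formula. -/
private lemma clm_det_two (f : ℝ×ℝ →L[ℝ] ℝ×ℝ) :
    f.det = (f (1,0)).1 * (f (0,1)).2 - (f (0,1)).1 * (f (1,0)).2 := by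
  have h := (LinearMap.det_toMatrix (Module.Basis.finTwoProd ℝ) (f : ℝ×ℝ →ₗ[ℝ] ℝ×ℝ)).symm
  rw [ContinuousLinearMap.det, h, Matrix.det_fin_two]
  simp [LinearMap.toMatrix_apply, Module.Basis.finTwoProd]

private lemma clm_det_comp (A B : ℝ×ℝ →L[ℝ] ℝ×ℝ) : (A.comp B).det = A.det * B.det := by
  simp [ContinuousLinearMap.det, ContinuousLinearMap.coe_comp, LinearMap.det_comp]

/-- The derivative of a kick map: a shear. -/
private noncomputable def kickD (c d : ℝ) : ℝ×ℝ →L[ℝ] ℝ×ℝ :=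
  (fst ℝ ℝ ℝ).prod (snd ℝ ℝ ℝ - (c * d) • fst ℝ ℝ ℝ)

private lemma kick_hasFDerivAt (c : ℝ) (g : ℝ → ℝ) (z : ℝ×ℝ)
    (hg : DifferentiableAt ℝ g z.1) :
    HasFDerivAt (fun z : ℝ×ℝ => (z.1, z.2 - c * g z.1)) (kickD c (deriv g z.1)) z := by
  have h1 : HasFDerivAt (fun z : ℝ×ℝ => g z.1)
      ((smulRight (1 : ℝ →L[ℝ] ℝ) (deriv g z.1)).comp (fst ℝ ℝ ℝ)) z :=
    (hg.hasDerivAt.hasFDerivAt).comp z hasFDerivAt_fst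
  have h3 := hasFDerivAt_snd.sub (h1.const_mul c)
  have heq : (snd ℝ ℝ ℝ) - c • ((smulRight (1 : ℝ →L[ℝ] ℝ) (deriv g z.1)).comp (fst ℝ ℝ ℝ))
      = snd ℝ ℝ ℝ - (c * deriv g z.1) • fst ℝ ℝ ℝ := by
    ext w <;> simp [mul_comm]
  rw [heq] at h3
  exact (HasFDerivAt.prodMk hasFDerivAt_fst h3 : _)

private lemma kickD_det (c d : ℝ) : (kickD c d).det = 1 := by
  rw [clm_det_two]; simp [kickD]

/-- A general linear map of the plane as a continuous linear map. -/
private noncomputable def rotD (a b c d : ℝ) : ℝ×ℝ →L[ℝ] ℝ×ℝ :=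
  (a • fst ℝ ℝ ℝ + b • snd ℝ ℝ ℝ).prod (c • fst ℝ ℝ ℝ + d • snd ℝ ℝ ℝ)

private lemma rot_hasFDerivAt (a b c d : ℝ) (z : ℝ×ℝ) :
    HasFDerivAt (fun z : ℝ×ℝ => (a * z.1 + b * z.2, c * z.1 + d * z.2)) (rotD a b c d) z := by
  have : (fun z : ℝ×ℝ => (a * z.1 + b * z.2, c * z.1 + d * z.2)) = (rotD a b c d : ℝ×ℝ → ℝ×ℝ) := by
    funext w; simp [rotD]
  rw [this]
  exact (rotD a b c d).hasFDerivAt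

/-- if `V` is C², the impulse integrator is differentiable everywhere and its
Jacobian determinant is `1` at every point, i.e. it preserves the standard area form on ℝ². -/
theorem impulseStep_differentiable_and_jacobian_det_eq_one
    (m ω h : ℝ) (hm : 0 < m) (hω : 0 < ω) (hh : 0 < h)
    (V : ℝ → ℝ) (hV : ContDiff ℝ 2 V) :
    ∀ z : ℝ × ℝ, DifferentiableAt ℝ (impulseStep m ω h V) z ∧
      (fderiv ℝ (impulseStep m ω h V) z).det = 1 := by
  intro z
  set g := deriv V with hg
  have hgd : Differentiable ℝ g := by
    have h2 : ContDiff ℝ (1+1) V := by norm_num; exact hV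
    exact ((contDiff_succ_iff_deriv.mp h2).2.2).differentiable one_ne_zero
  set c : ℝ := h / 2
  set a : ℝ := Real.cos (h * ω)
  set b : ℝ := Real.sin (h * ω) / (m * ω)
  set c' : ℝ := -(m * ω) * Real.sin (h * ω)
  set kick : ℝ×ℝ → ℝ×ℝ := fun w => (w.1, w.2 - c * g w.1) with hkick
  set rot : ℝ×ℝ → ℝ×ℝ := fun w => (a * w.1 + b * w.2, c' * w.1 + a * w.2) with hrot
  have hcomp : impulseStep m ω h V = kick ∘ rot ∘ kick := by
    funext w
    simp only [impulseStep, hkick, hrot, Function.comp_apply]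
    rfl
  have hK1 := kick_hasFDerivAt c g z (hgd z.1)
  have hR := rot_hasFDerivAt a b c' a (kick z)
  have hK2 := kick_hasFDerivAt c g (rot (kick z)) (hgd _)
  have hΦ : HasFDerivAt (impulseStep m ω h V)
      ((kickD c (deriv g (rot (kick z)).1)).comp
        ((rotD a b c' a).comp (kickD c (deriv g z.1)))) z := by
    rw [hcomp]
    exact hK2.comp z (hR.comp z hK1)
  refine ⟨hΦ.differentiableAt, ?_⟩
  rw [hΦ.fderiv, clm_det_comp, clm_det_comp, kickD_det, kickD_det]
  have hmω : m * ω ≠ 0 := by positivity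
  have hrd : (rotD a b c' a).det = 1 := by
    rw [clm_det_two]
    simp only [rotD, ContinuousLinearMap.prod_apply, ContinuousLinearMap.add_apply,
      ContinuousLinearMap.smul_apply, ContinuousLinearMap.coe_fst', ContinuousLinearMap.coe_snd',
      smul_eq_mul]
    have hpyth := Real.sin_sq_add_cos_sq (h * ω)
    have hbc : Real.sin (h * ω) / (m * ω) * (-(m * ω) * Real.sin (h * ω)) = -(Real.sin (h * ω))^2 := by
      field_simp
    simp only [a, b, c']
    linear_combination hpyth - hbc
  rw [hrd]; ring
end

section
/- If V : ℝ → ℝ is differentiable and (xₙ, pₙ) = Φⁿ(x₀, p₀) for n ≥ 0, then the positions generated by the impulse integrator satisfy the two-step recurrence x_{n+1} − 2·cos(hω)·xₙ + x_{n−1} = −(h²/m)·(sin(hω)/(hω))·V'(xₙ) for every n ≥ 1. -/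
/-- the positions generated by the impulse integrator satisfy the two-step
recurrence `x_{n+1} − 2 cos(hω) xₙ + x_{n−1} = −(h²/m)·(sin(hω)/(hω))·V'(xₙ)` for `n ≥ 1`. -/
theorem impulseStep_two_step_recurrence
    (m ω h : ℝ) (hm : 0 < m) (hω : 0 < ω) (hh : 0 < h)
    (V : ℝ → ℝ) (hV : Differentiable ℝ V)
    (x p : ℕ → ℝ)
    (hxp : ∀ n : ℕ, (x n, p n) = (impulseStep m ω h V)^[n] (x 0, p 0)) :
    ∀ n : ℕ, 1 ≤ n →
      x (n + 1) - 2 * Real.cos (h * ω) * x n + x (n - 1) =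
        -(h ^ 2 / m) * (Real.sin (h * ω) / (h * ω)) * deriv V (x n) := by
  have key : ∀ n : ℕ,
      x (n + 1) = Real.cos (h * ω) * x n +
        (Real.sin (h * ω) / (m * ω)) * (p n - (h / 2) * deriv V (x n)) ∧
      p (n + 1) = (-(m * ω) * Real.sin (h * ω) * x n +
        Real.cos (h * ω) * (p n - (h / 2) * deriv V (x n))) - (h / 2) * deriv V (x (n + 1)) := by
    intro n
    have h1 : (x (n + 1), p (n + 1)) = impulseStep m ω h V (x n, p n) := by
      rw [hxp (n + 1), hxp n, Function.iterate_succ_apply']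
    have hx1 : x (n + 1) = Real.cos (h * ω) * x n +
        (Real.sin (h * ω) / (m * ω)) * (p n - (h / 2) * deriv V (x n)) := by
      have := congrArg Prod.fst h1
      simpa [impulseStep] using this
    refine ⟨hx1, ?_⟩
    have := congrArg Prod.snd h1
    simp only [impulseStep] at this
    rw [this, ← hx1]
  intro n hn
  obtain ⟨k, rfl⟩ : ∃ k, n = k + 1 := ⟨n - 1, (Nat.succ_pred_eq_of_pos hn).symm⟩
  obtain ⟨e1, e3⟩ := key k
  obtain ⟨e2, -⟩ := key (k + 1)
  have hmω : m * ω ≠ 0 := by positivity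
  have hhω : h * ω ≠ 0 := by positivity
  have pyth := Real.sin_sq_add_cos_sq (h * ω)
  simp only [Nat.add_sub_cancel]
  rw [e2, e3, e1]
  field_simp
  linear_combination (-2 * ω * x k * m) * pyth
end
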